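/- arXiv:2601.20773 — 4 statements merged into one kernel-verified Lean document; each statement's English description precedes it below -/
import Mathlib

section
/- Let X be a metric space, f : X → {-1,1}, A_x = {y : f(y) ≠ f(x)} nonempty for all x, ξ(x) = d(x, A_x), and ℓ_α(x) = f(x)·ξ(x)^α. If 0 < α ≤ 1, then for all x, y ∈ X, |ℓ_α(x) − ℓ_α(y)| ≤ 2 d(x,y)^α; that is, ℓ_α is α-Hölder continuous with constant 2. -/
lemma aux_rpow_add (a b : ℝ) (hb : 0 ≤ b) (hba : b ≤ a) {p : ℝ} (hp0 : 0 ≤ p) (hp1 : p ≤ 1) :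
    a ^ p ≤ (a - b) ^ p + b ^ p := by
  have h := NNReal.rpow_add_le_add_rpow (Real.toNNReal (a - b)) (Real.toNNReal b) hp0 hp1
  have h' := NNReal.coe_le_coe.2 h
  have hab : (0:ℝ) ≤ a - b := sub_nonneg.2 hba
  rw [← Real.toNNReal_add hab hb, sub_add_cancel] at h'
  simpa [NNReal.coe_rpow, Real.coe_toNNReal _ hab, Real.coe_toNNReal _ hb,
    Real.coe_toNNReal _ (hb.trans hba)] using h'

lemma aux_abs_rpow (a b : ℝ) (ha : 0 ≤ a) (hb : 0 ≤ b) {p : ℝ} (hp0 : 0 ≤ p) (hp1 : p ≤ 1) :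
    |a ^ p - b ^ p| ≤ |a - b| ^ p := by
  rcases le_total b a with h | h
  · rw [abs_of_nonneg (sub_nonneg.2 h), abs_of_nonneg
      (sub_nonneg.2 (Real.rpow_le_rpow hb h hp0))]
    linarith [aux_rpow_add a b hb h hp0 hp1]
  · rw [abs_sub_comm, abs_sub_comm a b, abs_of_nonneg (sub_nonneg.2 h), abs_of_nonneg
      (sub_nonneg.2 (Real.rpow_le_rpow ha h hp0))]
    linarith [aux_rpow_add b a ha h hp0 hp1]

theorem stmt_5 {X : Type*} [MetricSpace X] (f : X → ℝ)
    (hf : ∀ x, f x = -1 ∨ f x = 1)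
    (hA : ∀ x : X, {y : X | f y ≠ f x}.Nonempty)
    (α : ℝ) (hα0 : 0 < α) (hα1 : α ≤ 1) (x y : X) :
    |f x * Metric.infDist x {z : X | f z ≠ f x} ^ α -
      f y * Metric.infDist y {z : X | f z ≠ f y} ^ α| ≤ 2 * dist x y ^ α := by
  have hd : (0:ℝ) ≤ dist x y := dist_nonneg
  have hdα : (0:ℝ) ≤ dist x y ^ α := Real.rpow_nonneg hd α
  by_cases hxy : f x = f y
  · rw [hxy, ← mul_sub, abs_mul]
    have hfy : |f y| = 1 := by rcases hf y with h | h <;> simp [h]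
    rw [hfy, one_mul]
    have hx0 := Metric.infDist_nonneg (x := x) (s := {z : X | f z ≠ f y})
    have hy0 := Metric.infDist_nonneg (x := y) (s := {z : X | f z ≠ f y})
    have hlip : |Metric.infDist x {z : X | f z ≠ f y} -
        Metric.infDist y {z : X | f z ≠ f y}| ≤ dist x y := by
      rw [abs_sub_le_iff]
      constructor
      · have := Metric.infDist_le_infDist_add_dist (s := {z : X | f z ≠ f y}) (x := x) (y := y)
        linarith
      · have := Metric.infDist_le_infDist_add_dist (s := {z : X | f z ≠ f y}) (x := y) (y := x)
        rw [dist_comm] at this; linarith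
    calc |Metric.infDist x {z : X | f z ≠ f y} ^ α -
        Metric.infDist y {z : X | f z ≠ f y} ^ α|
        ≤ |Metric.infDist x {z : X | f z ≠ f y} -
            Metric.infDist y {z : X | f z ≠ f y}| ^ α :=
          aux_abs_rpow _ _ hx0 hy0 hα0.le hα1
      _ ≤ dist x y ^ α := Real.rpow_le_rpow (abs_nonneg _) hlip hα0.le
      _ ≤ 2 * dist x y ^ α := by linarith
  · have hyx : y ∈ {z : X | f z ≠ f x} := fun h => hxy h.symm
    have hxy' : x ∈ {z : X | f z ≠ f y} := fun h => hxy h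
    have h1 : Metric.infDist x {z : X | f z ≠ f x} ≤ dist x y :=
      Metric.infDist_le_dist_of_mem hyx
    have h2 : Metric.infDist y {z : X | f z ≠ f y} ≤ dist x y := by
      have := Metric.infDist_le_dist_of_mem (x := y) hxy'
      rwa [dist_comm] at this
    have hx0 := Metric.infDist_nonneg (x := x) (s := {z : X | f z ≠ f x})
    have hy0 := Metric.infDist_nonneg (x := y) (s := {z : X | f z ≠ f y})
    have h1' : Metric.infDist x {z : X | f z ≠ f x} ^ α ≤ dist x y ^ α :=
      Real.rpow_le_rpow hx0 h1 hα0.le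
    have h2' : Metric.infDist y {z : X | f z ≠ f y} ^ α ≤ dist x y ^ α :=
      Real.rpow_le_rpow hy0 h2 hα0.le
    have hfx : |f x| = 1 := by rcases hf x with h | h <;> simp [h]
    have hfy : |f y| = 1 := by rcases hf y with h | h <;> simp [h]
    calc |f x * Metric.infDist x {z : X | f z ≠ f x} ^ α -
        f y * Metric.infDist y {z : X | f z ≠ f y} ^ α|
        ≤ |f x * Metric.infDist x {z : X | f z ≠ f x} ^ α| +
          |f y * Metric.infDist y {z : X | f z ≠ f y} ^ α| := abs_sub _ _
      _ = Metric.infDist x {z : X | f z ≠ f x} ^ α +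
          Metric.infDist y {z : X | f z ≠ f y} ^ α := by
          rw [abs_mul, abs_mul, hfx, hfy, one_mul, one_mul,
            abs_of_nonneg (Real.rpow_nonneg hx0 α), abs_of_nonneg (Real.rpow_nonneg hy0 α)]
      _ ≤ 2 * dist x y ^ α := by linarith
end

section
/- Let X be a metric space bounded by D > 0 (i.e., d(x,y) ≤ D for all x,y), f : X → {-1,1}, A_x = {y : f(y) ≠ f(x)} nonempty for all x, ξ(x) = d(x, A_x), and ℓ_α(x) = f(x)·ξ(x)^α. If α ≥ 1, then for all x, y ∈ X, |ℓ_α(x) − ℓ_α(y)| ≤ 2α·D^{α−1}·d(x,y); that is, ℓ_α is Lipschitz with constant 2αD^{α−1}. -/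
open Real

lemma rpow_lip {M α : ℝ} (hM : 0 ≤ M) (hα : 1 ≤ α) {a b : ℝ}
    (ha : a ∈ Set.Icc 0 M) (hb : b ∈ Set.Icc 0 M) :
    |a ^ α - b ^ α| ≤ α * M ^ (α - 1) * |a - b| := by
  have hconv : Convex ℝ (Set.Icc (0:ℝ) M) := convex_Icc 0 M
  have := hconv.norm_image_sub_le_of_norm_hasDerivWithin_le
    (f := fun t : ℝ => t ^ α) (f' := fun t : ℝ => α * t ^ (α - 1))
    (fun t _ => (Real.hasDerivAt_rpow_const (Or.inr hα)).hasDerivWithinAt)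
    (fun t ht => by
      rw [Real.norm_eq_abs, abs_mul, abs_of_nonneg (by linarith : (0:ℝ) ≤ α),
        abs_of_nonneg (Real.rpow_nonneg ht.1 _)]
      exact mul_le_mul_of_nonneg_left
        (Real.rpow_le_rpow ht.1 ht.2 (by linarith)) (by linarith)) hb ha
  simpa [Real.norm_eq_abs] using this

lemma rpow_le_aux {D d α a : ℝ} (hα : 1 ≤ α) (h0 : 0 ≤ a) (haD : a ≤ D)
    (had : a ≤ d) : a ^ α ≤ D ^ (α - 1) * d := by
  rcases eq_or_lt_of_le h0 with h | h
  · rw [← h, Real.zero_rpow (by linarith)]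
    exact mul_nonneg (Real.rpow_nonneg (by linarith) _) (by linarith)
  · calc a ^ α = a ^ (α - 1) * a := by
          rw [← Real.rpow_add_one h.ne' (α - 1), sub_add_cancel]
      _ ≤ D ^ (α - 1) * d :=
          mul_le_mul (Real.rpow_le_rpow h0 haD (by linarith)) had h0
            (Real.rpow_nonneg (by linarith) _)

theorem stmt_6 {X : Type*} [MetricSpace X] (D : ℝ) (hD : 0 < D)
    (hbd : ∀ x y : X, dist x y ≤ D) (f : X → ℝ)
    (hf : ∀ x, f x = -1 ∨ f x = 1)
    (hA : ∀ x : X, {y : X | f y ≠ f x}.Nonempty)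
    (α : ℝ) (hα : 1 ≤ α) (x y : X) :
    |f x * Metric.infDist x {z : X | f z ≠ f x} ^ α -
      f y * Metric.infDist y {z : X | f z ≠ f y} ^ α| ≤ 2 * α * D ^ (α - 1) * dist x y := by
  set ξx := Metric.infDist x {z : X | f z ≠ f x} with hξx
  set ξy := Metric.infDist y {z : X | f z ≠ f y} with hξy
  have hξx0 : 0 ≤ ξx := Metric.infDist_nonneg
  have hξy0 : 0 ≤ ξy := Metric.infDist_nonneg
  have hξxD : ξx ≤ D := by
    obtain ⟨z, hz⟩ := hA x
    exact le_trans (Metric.infDist_le_dist_of_mem hz) (hbd x z)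
  have hξyD : ξy ≤ D := by
    obtain ⟨z, hz⟩ := hA y
    exact le_trans (Metric.infDist_le_dist_of_mem hz) (hbd y z)
  have hDpow : 0 ≤ D ^ (α - 1) := Real.rpow_nonneg hD.le _
  have hαpos : (0:ℝ) < α := by linarith
  have hdnn : 0 ≤ dist x y := dist_nonneg
  by_cases hfxy : f x = f y
  · have hsets : {z : X | f z ≠ f x} = {z : X | f z ≠ f y} := by simp [hfxy]
    have hlip : |ξx - ξy| ≤ dist x y := by
      rw [hξx, hξy, hsets, abs_sub_le_iff]
      constructor
      · linarith [Metric.infDist_le_infDist_add_dist (x := x) (y := y)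
          (s := {z : X | f z ≠ f y})]
      · linarith [Metric.infDist_le_infDist_add_dist (x := y) (y := x)
          (s := {z : X | f z ≠ f y}), dist_comm x y]
    have key := rpow_lip hD.le hα ⟨hξx0, hξxD⟩ ⟨hξy0, hξyD⟩
    have habs : |f x| = 1 := by rcases hf x with h | h <;> simp [h]
    calc |f x * ξx ^ α - f y * ξy ^ α| = |f x| * |ξx ^ α - ξy ^ α| := by
          rw [hfxy, ← abs_mul, mul_sub]
      _ = |ξx ^ α - ξy ^ α| := by rw [habs, one_mul]
      _ ≤ α * D ^ (α - 1) * |ξx - ξy| := key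
      _ ≤ α * D ^ (α - 1) * dist x y :=
          mul_le_mul_of_nonneg_left hlip (by positivity)
      _ ≤ 2 * α * D ^ (α - 1) * dist x y := by nlinarith [mul_nonneg (mul_nonneg hαpos.le hDpow) hdnn]
  · have hyA : y ∈ {z : X | f z ≠ f x} := hfxy ∘ Eq.symm
    have hxA : x ∈ {z : X | f z ≠ f y} := hfxy
    have h1 : ξx ≤ dist x y := Metric.infDist_le_dist_of_mem hyA
    have h2 : ξy ≤ dist x y := by
      simpa [dist_comm] using Metric.infDist_le_dist_of_mem hxA
    have hb1 : ξx ^ α ≤ D ^ (α - 1) * dist x y := rpow_le_aux hα hξx0 hξxD h1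
    have hb2 : ξy ^ α ≤ D ^ (α - 1) * dist x y := rpow_le_aux hα hξy0 hξyD h2
    have hsign : f x * ξx ^ α - f y * ξy ^ α = f x * (ξx ^ α + ξy ^ α) := by
      rcases hf x with h | h <;> rcases hf y with h' | h' <;>
        first | (exfalso; exact hfxy (h.trans h'.symm)) | (rw [h, h']; ring)
    rw [hsign, abs_mul]
    have habs : |f x| = 1 := by rcases hf x with h | h <;> simp [h]
    rw [habs, one_mul,
      abs_of_nonneg (add_nonneg (Real.rpow_nonneg hξx0 _) (Real.rpow_nonneg hξy0 _))]
    have : ξx ^ α + ξy ^ α ≤ 2 * (D ^ (α - 1) * dist x y) := by linarith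
    calc ξx ^ α + ξy ^ α ≤ 2 * (D ^ (α - 1) * dist x y) := this
      _ ≤ 2 * α * D ^ (α - 1) * dist x y := by nlinarith [mul_nonneg hDpow hdnn]
end

section
/- Let X be a metric space, f : X → {-1,1} with A_x = {y : f(y) ≠ f(x)} nonempty for all x, ξ(x) = d(x, A_x), and ℓ_α(x) = f(x)·ξ(x)^α for α > 0. If f(x) ≠ f(y) and α ≥ 1 with d bounded by D > 0, then |ℓ_α(x) − ℓ_α(y)| ≤ 2α·D^{α−1}·d(x,y). -/
theorem stmt_8 {X : Type*} [MetricSpace X] (D : ℝ) (hD : 0 < D)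
    (hbd : ∀ x y : X, dist x y ≤ D) (f : X → ℝ)
    (hf : ∀ x, f x = -1 ∨ f x = 1)
    (hA : ∀ x : X, {y : X | f y ≠ f x}.Nonempty)
    (α : ℝ) (hα : 1 ≤ α) (x y : X) (hxy : f x ≠ f y) :
    |f x * Metric.infDist x {z : X | f z ≠ f x} ^ α -
      f y * Metric.infDist y {z : X | f z ≠ f y} ^ α| ≤ 2 * α * D ^ (α - 1) * dist x y := by
  set a := Metric.infDist x {z : X | f z ≠ f x} with ha
  set b := Metric.infDist y {z : X | f z ≠ f y} with hb
  have ha0 : 0 ≤ a := Metric.infDist_nonneg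
  have hb0 : 0 ≤ b := Metric.infDist_nonneg
  have hd : 0 < dist x y := by
    refine dist_pos.2 fun h => hxy ?_
    rw [h]
  have had : a ≤ dist x y := Metric.infDist_le_dist_of_mem (by simpa using hxy.symm)
  have hbd' : b ≤ dist x y := by
    have := Metric.infDist_le_dist_of_mem (s := {z : X | f z ≠ f y}) (x := y) (y := x)
      (by simpa using hxy)
    simpa [dist_comm] using this
  have hα0 : 0 ≤ α := by linarith
  have haα : a ^ α ≤ dist x y ^ α := Real.rpow_le_rpow ha0 had hα0
  have hbα : b ^ α ≤ dist x y ^ α := Real.rpow_le_rpow hb0 hbd' hα0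
  have hDpow : (0:ℝ) ≤ D ^ (α - 1) := Real.rpow_nonneg hD.le _
  have key : dist x y ^ α ≤ α * D ^ (α - 1) * dist x y := by
    have h1 : dist x y ^ α = dist x y ^ (α - 1) * dist x y := by
      rw [← Real.rpow_add_one hd.ne' (α - 1)]
      ring_nf
    have h2 : dist x y ^ (α - 1) ≤ D ^ (α - 1) :=
      Real.rpow_le_rpow hd.le (hbd x y) (by linarith)
    rw [h1]
    calc dist x y ^ (α - 1) * dist x y ≤ D ^ (α - 1) * dist x y :=
          mul_le_mul_of_nonneg_right h2 hd.le
      _ ≤ α * D ^ (α - 1) * dist x y := by nlinarith [mul_nonneg hDpow hd.le]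
  have haa : 0 ≤ a ^ α := Real.rpow_nonneg ha0 _
  have hbb : 0 ≤ b ^ α := Real.rpow_nonneg hb0 _
  rcases hf x with h1 | h1 <;> rcases hf y with h2 | h2 <;>
    first
    | (exact absurd (h1.trans h2.symm) hxy)
    | (rw [h1, h2]
       rw [abs_le]
       constructor <;> nlinarith)
end

section
/- Let X be a metric space bounded by D, f : X → {-1,1} with A_x nonempty for all x, ξ(x) = d(x,A_x), and ℓ_α(x) = f(x)·ξ(x)^α. Then for all α ≥ 1, ℓ_α is uniformly continuous on X; and for 0 < α ≤ 1, ℓ_α is uniformly continuous on X. -/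
set_option maxHeartbeats 800000

private lemma stmt_17_aux {X : Type*} [MetricSpace X] (D : ℝ) (hD : 0 < D)
    (hbd : ∀ x y : X, dist x y ≤ D) (f : X → ℝ)
    (hf : ∀ x, f x = -1 ∨ f x = 1)
    (hA : ∀ x : X, {y : X | f y ≠ f x}.Nonempty) (α : ℝ) (hα : 0 < α) :
    UniformContinuous fun x : X => f x * Metric.infDist x {z : X | f z ≠ f x} ^ α := by
  set ξ : X → ℝ := fun x => Metric.infDist x {z : X | f z ≠ f x} with hξ
  set g : X → ℝ := fun x => f x * ξ x with hg
  set φ : ℝ → ℝ := fun t => (max t 0) ^ α - (max (-t) 0) ^ α with hφ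
  have habs : ∀ x, |f x| = 1 := by
    intro x; rcases hf x with h | h <;> rw [h] <;> norm_num
  have hξ0 : ∀ x, 0 ≤ ξ x := fun x => Metric.infDist_nonneg
  have hξD : ∀ x, ξ x ≤ D := by
    intro x
    obtain ⟨z, hz⟩ := hA x
    exact (Metric.infDist_le_dist_of_mem hz).trans (hbd x z)
  have hgabs : ∀ x, |g x| = ξ x := by
    intro x; rw [hg]; simp only [abs_mul, habs, one_mul, abs_of_nonneg (hξ0 x)]
  have hlip : LipschitzWith 2 g := by
    apply LipschitzWith.of_dist_le_mul
    intro x y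
    rw [Real.dist_eq]
    push_cast
    by_cases hxy : f x = f y
    · have hsets : {z : X | f z ≠ f x} = {z : X | f z ≠ f y} := by rw [hxy]
      have h1 : ξ x ≤ ξ y + dist x y := by
        rw [hξ]; simp only [hsets]; exact Metric.infDist_le_infDist_add_dist
      have h2 : ξ y ≤ ξ x + dist y x := by
        rw [hξ]; simp only [← hsets]; exact Metric.infDist_le_infDist_add_dist
      rw [dist_comm y x] at h2
      have : |ξ x - ξ y| ≤ dist x y := abs_sub_le_iff.mpr ⟨by linarith, by linarith⟩
      calc |g x - g y| = |f x * ξ x - f x * ξ y| := by rw [hg]; simp [hxy]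
        _ = |f x| * |ξ x - ξ y| := by rw [← abs_mul]; ring_nf
        _ ≤ 1 * dist x y := by rw [habs, one_mul, one_mul]; exact this
        _ ≤ 2 * dist x y := by nlinarith [dist_nonneg (x := x) (y := y)]
    · have hy : y ∈ {z : X | f z ≠ f x} := fun h => hxy h.symm
      have hx : x ∈ {z : X | f z ≠ f y} := hxy
      have h1 : ξ x ≤ dist x y := Metric.infDist_le_dist_of_mem hy
      have h2 : ξ y ≤ dist x y := by
        rw [dist_comm]; exact Metric.infDist_le_dist_of_mem hx
      calc |g x - g y| ≤ |g x| + |g y| := abs_sub _ _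
        _ = ξ x + ξ y := by rw [hgabs, hgabs]
        _ ≤ 2 * dist x y := by linarith
  have hmem : ∀ x, g x ∈ Set.Icc (-D) D := by
    intro x
    have := hgabs x
    have h1 : |g x| ≤ D := by rw [this]; exact hξD x
    exact ⟨neg_le_of_abs_le h1, le_of_abs_le h1⟩
  have hφc : Continuous φ := by
    apply Continuous.sub
    · exact (continuous_id.max continuous_const).rpow_const fun t => Or.inr hα.le
    · exact (continuous_neg.max continuous_const).rpow_const fun t => Or.inr hα.le
  haveI : CompactSpace (Set.Icc (-D) D) :=
    isCompact_iff_compactSpace.mp (isCompact_Icc : IsCompact (Set.Icc (-D) D))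
  have ucφ : UniformContinuous fun s : Set.Icc (-D) D => φ s.val :=
    CompactSpace.uniformContinuous_of_continuous (hφc.comp continuous_subtype_val)
  have ucg : UniformContinuous fun x : X => (⟨g x, hmem x⟩ : Set.Icc (-D) D) :=
    (hlip.uniformContinuous).subtype_mk hmem
  have uc : UniformContinuous fun x : X => φ (g x) := ucφ.comp ucg
  have key : ∀ x, f x * ξ x ^ α = φ (g x) := by
    intro x
    rcases hf x with h | h
    · rw [hφ]
      simp only [hg, h, neg_one_mul, neg_neg]
      rw [max_eq_right (neg_nonpos.mpr (hξ0 x)), max_eq_left (hξ0 x),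
        Real.zero_rpow hα.ne']
      ring
    · rw [hφ]
      simp only [hg, h, one_mul]
      rw [max_eq_left (hξ0 x), max_eq_right (neg_nonpos.mpr (hξ0 x)),
        Real.zero_rpow hα.ne']
      ring
  convert uc using 1
  funext x
  exact key x

theorem stmt_17 {X : Type*} [MetricSpace X] (D : ℝ) (hD : 0 < D)
    (hbd : ∀ x y : X, dist x y ≤ D) (f : X → ℝ)
    (hf : ∀ x, f x = -1 ∨ f x = 1)
    (hA : ∀ x : X, {y : X | f y ≠ f x}.Nonempty) (α : ℝ) :
    (1 ≤ α → UniformContinuous fun x : X => f x * Metric.infDist x {z : X | f z ≠ f x} ^ α) ∧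
    (0 < α → α ≤ 1 →
      UniformContinuous fun x : X => f x * Metric.infDist x {z : X | f z ≠ f x} ^ α) := by
  exact ⟨fun h => stmt_17_aux D hD hbd f hf hA α (lt_of_lt_of_le one_pos h),
    fun h _ => stmt_17_aux D hD hbd f hf hA α h⟩
end
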